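/- The linear orders ω, ω*, ω+1, and 1+ω* form a basis for the infinite (countable or not) linear orders under the epimorphism relation: for every infinite linear order L, there is a monotone surjection from L onto one of ω, ω*, ω+1, 1+ω*. -/

import Mathlib

open Function

private lemma epi_basis_key {α : Type*} [LinearOrder α] (a : ℕ → α) (ha : StrictMono a) :
    (∃ f : α → ℕ, Monotone f ∧ Function.Surjective f) ∨
    (∃ f : α → WithTop ℕ, Monotone f ∧ Function.Surjective f) := by
  set S : α → Set ℕ := fun x => {n : ℕ | x < a (n + 1)} with hS
  have hmono : ∀ {x y : α}, x ≤ y → S y ⊆ S x := by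
    intro x y hxy n hn
    exact lt_of_le_of_lt hxy hn
  have hSa : ∀ k : ℕ, S (a k) = Set.Ici k := by
    intro k
    ext n
    simp only [hS, Set.mem_setOf_eq, Set.mem_Ici, ha.lt_iff_lt]
    omega
  have hinf : ∀ k : ℕ, sInf (S (a k)) = k := by
    intro k
    rw [hSa k]
    exact csInf_Ici
  by_cases hub : ∃ x : α, ∀ n, a n ≤ x
  · -- there is an upper bound for the sequence: surject onto ω+1
    obtain ⟨x₀, hx₀⟩ := hub
    classical
    refine Or.inr ⟨fun x => if h : (S x).Nonempty then ((sInf (S x) : ℕ) : WithTop ℕ) else ⊤,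
      ?_, ?_⟩
    · intro x y hxy
      by_cases hy : (S y).Nonempty
      · have hx : (S x).Nonempty := hy.mono (hmono hxy)
        simp only [dif_pos hx, dif_pos hy]
        exact_mod_cast Nat.sInf_le (hmono hxy (Nat.sInf_mem hy))
      · simp only [dif_neg hy]
        exact le_top
    · intro m
      induction m with
      | top =>
        refine ⟨x₀, ?_⟩
        have : ¬ (S x₀).Nonempty := by
          rintro ⟨n, hn⟩
          exact absurd (hx₀ (n + 1)) (not_le_of_gt hn)
        simp only [dif_neg this]
      | coe k =>
        refine ⟨a k, ?_⟩
        have hk : (S (a k)).Nonempty := by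
          rw [hSa k]; exact Set.nonempty_Ici
        simp only [dif_pos hk, hinf k]; rfl
  · -- no upper bound: surject onto ω
    push_neg at hub
    have hne : ∀ x : α, (S x).Nonempty := by
      intro x
      obtain ⟨n, hn⟩ := hub x
      exact ⟨n, lt_of_lt_of_le hn (ha.monotone (Nat.le_succ n))⟩
    refine Or.inl ⟨fun x => sInf (S x), ?_, ?_⟩
    · intro x y hxy
      exact Nat.sInf_le (hmono hxy (Nat.sInf_mem (hne y)))
    · intro k
      exact ⟨a k, hinf k⟩

private lemma exists_strictMono_or_strictAnti (L : Type*) [LinearOrder L] [Infinite L] :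
    (∃ a : ℕ → L, StrictMono a) ∨ (∃ a : ℕ → L, StrictAnti a) := by
  by_cases hwf : WellFoundedLT L
  · left
    have hwfset : (Set.univ : Set L).IsWF := Set.isWF_univ_iff.mpr hwf
    have hpwo : (Set.univ : Set L).IsPWO := hwfset.isPWO
    obtain ⟨g, hg⟩ := hpwo.exists_monotone_subseq (f := fun n => (Infinite.natEmbedding L) n)
      (fun _ => Set.mem_univ _)
    refine ⟨fun n => (Infinite.natEmbedding L) (g n), ?_⟩
    have hmono : Monotone fun n => (Infinite.natEmbedding L) (g n) :=
      fun m n h => hg h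
    exact hmono.strictMono_of_injective
      ((Infinite.natEmbedding L).injective.comp (g.injective))
  · right
    have : ¬ WellFounded ((· < ·) : L → L → Prop) := fun h => hwf ⟨h⟩
    rw [RelEmbedding.wellFounded_iff_isEmpty, not_isEmpty_iff] at this
    obtain ⟨f⟩ := this
    refine ⟨f, fun m n h => ?_⟩
    exact f.map_rel_iff.mpr h

/-- `ω`, `ω*`, `ω+1` and `1+ω*` form a basis for the infinite linear orders under the
epimorphism relation: every infinite linear order admits a monotone surjection onto
`ℕ`, an antitone surjection onto `ℕ` (i.e. a monotone surjection onto `ω*`),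
a monotone surjection onto `ω+1 = WithTop ℕ`, or an antitone surjection onto
`WithTop ℕ` (i.e. a monotone surjection onto `1+ω*`). -/
theorem epi_basis_infinite_linear_orders {L : Type*} [LinearOrder L] [Infinite L] :
    (∃ f : L → ℕ, Monotone f ∧ Function.Surjective f) ∨
    (∃ f : L → ℕ, Antitone f ∧ Function.Surjective f) ∨
    (∃ f : L → WithTop ℕ, Monotone f ∧ Function.Surjective f) ∨
    (∃ f : L → WithTop ℕ, Antitone f ∧ Function.Surjective f) := by
  rcases exists_strictMono_or_strictAnti L with ⟨a, ha⟩ | ⟨a, ha⟩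
  · rcases epi_basis_key a ha with ⟨f, hf, hsurj⟩ | ⟨f, hf, hsurj⟩
    · exact Or.inl ⟨f, hf, hsurj⟩
    · exact Or.inr (Or.inr (Or.inl ⟨f, hf, hsurj⟩))
  · -- use the dual order
    have ha' : StrictMono (fun n => OrderDual.toDual (a n) : ℕ → Lᵒᵈ) :=
      fun m n h => by simpa using ha h
    rcases epi_basis_key (α := Lᵒᵈ) _ ha' with ⟨f, hf, hsurj⟩ | ⟨f, hf, hsurj⟩
    · refine Or.inr (Or.inl ⟨fun x => f (OrderDual.toDual x), fun x y h => ?_, ?_⟩)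
      · exact hf (by simpa using h)
      · intro n; obtain ⟨x, hx⟩ := hsurj n; exact ⟨OrderDual.ofDual x, hx⟩
    · refine Or.inr (Or.inr (Or.inr ⟨fun x => f (OrderDual.toDual x), fun x y h => ?_, ?_⟩))
      · exact hf (by simpa using h)
      · intro n; obtain ⟨x, hx⟩ := hsurj n; exact ⟨OrderDual.ofDual x, hx⟩
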